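/- Let Ω be a finite probability space, F, 𝒬, 𝒜 nonempty finite types, and K, D, M natural numbers with M < D and D + M ≤ K. Let X : Fin K → Ω → F, Q : Ω → 𝒬, and A : Ω → 𝒜 be random variables. Suppose that for every W* ⊆ Fin K with |W*| = D there exists S* ⊆ Fin K with |S*| = M, S* disjoint from W*, such that H[X_{W*} | (A, Q, X_{S*})] = 0. Then there exists S_* ⊆ Fin K with |S_*| = M such that H[X_{[K]∖S_*} | (A, Q, X_{S_*})] = 0. -/

import Mathlib

open Finset Real

/-- Probability of an event under a pmf `p` on a finite sample space. -/
noncomputable def probOf {Ω : Type*} [Fintype Ω] (p : Ω → ℝ) (E : Set Ω) : ℝ :=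
  ∑ ω : Ω, E.indicator p ω

/-- Distribution (pmf) of a random variable `X` under `p`. -/
noncomputable def distOf {Ω F : Type*} [Fintype Ω] (p : Ω → ℝ) (X : Ω → F) (y : F) : ℝ :=
  probOf p {ω | X ω = y}

/-- Shannon entropy (natural logarithm) of a random variable on a finite probability space. -/
noncomputable def Hent {Ω F : Type*} [Fintype Ω] [Fintype F] (p : Ω → ℝ) (X : Ω → F) : ℝ :=
  -∑ y : F, distOf p X y * Real.log (distOf p X y)

/-- Conditional entropy `H[X | Y] = H[(X, Y)] - H[Y]`. -/
noncomputable def Hcond {Ω F G : Type*} [Fintype Ω] [Fintype F] [Fintype G]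
    (p : Ω → ℝ) (X : Ω → F) (Y : Ω → G) : ℝ :=
  Hent p (fun ω => (X ω, Y ω)) - Hent p Y

/-- The random variable `X_T = (X i)_{i ∈ T}` obtained by restricting the family `X`
to the index set `T`. -/
def XT {Ω F : Type*} {K : ℕ} (X : Fin K → Ω → F) (T : Finset (Fin K)) :
    Ω → (T → F) :=
  fun ω i => X i ω

open scoped Classical

section SuperAdd

lemma mul_log_superadd {a b : ℝ} (ha : 0 ≤ a) (hb : 0 ≤ b) :
    a * Real.log a + b * Real.log b ≤ (a + b) * Real.log (a + b) := by
  rcases ha.eq_or_lt with h | h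
  · simp [← h]
  rcases hb.eq_or_lt with h' | h'
  · simp [← h']
  have h1 : a * Real.log a ≤ a * Real.log (a + b) :=
    mul_le_mul_of_nonneg_left (Real.log_le_log h (by linarith)) ha
  have h2 : b * Real.log b ≤ b * Real.log (a + b) :=
    mul_le_mul_of_nonneg_left (Real.log_le_log h' (by linarith)) hb
  nlinarith [h1, h2]

lemma mul_log_superadd_strict {a b : ℝ} (ha : 0 < a) (hb : 0 < b) :
    a * Real.log a + b * Real.log b < (a + b) * Real.log (a + b) := by
  have h1 : a * Real.log a < a * Real.log (a + b) :=
    mul_lt_mul_of_pos_left (Real.log_lt_log ha (by linarith)) ha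
  have h2 : b * Real.log b ≤ b * Real.log (a + b) :=
    mul_le_mul_of_nonneg_left (Real.log_le_log hb (by linarith)) hb.le
  nlinarith [h1, h2]

lemma sum_mul_log_le {ι : Type*} (s : Finset ι) (f : ι → ℝ) (hf : ∀ i ∈ s, 0 ≤ f i) :
    ∑ i ∈ s, f i * Real.log (f i) ≤ (∑ i ∈ s, f i) * Real.log (∑ i ∈ s, f i) := by
  induction s using Finset.cons_induction with
  | empty => simp
  | cons a s ha ih =>
    rw [Finset.sum_cons, Finset.sum_cons]
    have h1 : ∑ i ∈ s, f i * Real.log (f i) ≤ (∑ i ∈ s, f i) * Real.log (∑ i ∈ s, f i) :=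
      ih (fun i hi => hf i (Finset.mem_cons_of_mem hi))
    have h2 := mul_log_superadd (hf a (Finset.mem_cons_self a s))
      (Finset.sum_nonneg (fun i hi => hf i (Finset.mem_cons_of_mem hi)))
    linarith

lemma sum_mul_log_lt {ι : Type*} [Fintype ι] (f : ι → ℝ) (hf : ∀ i, 0 ≤ f i) {i j : ι}
    (hij : i ≠ j) (hi : 0 < f i) (hj : 0 < f j) :
    ∑ k, f k * Real.log (f k) < (∑ k, f k) * Real.log (∑ k, f k) := by
  have hiu : i ∈ (Finset.univ : Finset ι) := Finset.mem_univ i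
  have hju : j ∈ (Finset.univ : Finset ι).erase i := by
    simp [Finset.mem_erase, hij.symm]
  set s := ((Finset.univ : Finset ι).erase i).erase j with hs
  have hsplit : ∀ g : ι → ℝ, ∑ k, g k = g i + (g j + ∑ k ∈ s, g k) := by
    intro g
    rw [← Finset.add_sum_erase _ g hiu, ← Finset.add_sum_erase _ g hju]
  rw [hsplit (fun k => f k * Real.log (f k)), hsplit f]
  have hrest : ∑ k ∈ s, f k * Real.log (f k) ≤ (∑ k ∈ s, f k) * Real.log (∑ k ∈ s, f k) :=
    sum_mul_log_le s f (fun k _ => hf k)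
  have hrest0 : 0 ≤ ∑ k ∈ s, f k := Finset.sum_nonneg (fun k _ => hf k)
  have hstep1 : f i * Real.log (f i) + f j * Real.log (f j) <
      (f i + f j) * Real.log (f i + f j) := mul_log_superadd_strict hi hj
  have hstep2 : (f i + f j) * Real.log (f i + f j) +
      (∑ k ∈ s, f k) * Real.log (∑ k ∈ s, f k) ≤
      (f i + f j + ∑ k ∈ s, f k) * Real.log (f i + f j + ∑ k ∈ s, f k) :=
    mul_log_superadd (by positivity) hrest0
  have heq : f i + (f j + ∑ k ∈ s, f k) = f i + f j + ∑ k ∈ s, f k := by ring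
  rw [heq]
  linarith

end SuperAdd

section Determinism

variable {Ω F G : Type*} [Fintype Ω] [Fintype F] [Fintype G]

/-- `X` is a.s. determined by `Y`. -/
def Det (p : Ω → ℝ) (X : Ω → F) (Y : Ω → G) : Prop :=
  ∀ ω ω', 0 < p ω → 0 < p ω' → Y ω = Y ω' → X ω = X ω'

lemma distOf_def (p : Ω → ℝ) (X : Ω → F) (y : F) :
    distOf p X y = ∑ ω, if X ω = y then p ω else 0 := by
  unfold distOf probOf
  refine Finset.sum_congr rfl fun ω _ => ?_
  rw [Set.indicator_apply]
  simp [Set.mem_setOf_eq]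

lemma distOf_nonneg (p : Ω → ℝ) (hp : ∀ ω, 0 ≤ p ω) (X : Ω → F) (y : F) :
    0 ≤ distOf p X y := by
  rw [distOf_def]
  exact Finset.sum_nonneg fun ω _ => by split <;> simp [hp ω]

lemma le_distOf (p : Ω → ℝ) (hp : ∀ ω, 0 ≤ p ω) (X : Ω → F) (ω : Ω) :
    p ω ≤ distOf p X (X ω) := by
  rw [distOf_def]
  have h : p ω = if X ω = X ω then p ω else 0 := by simp
  rw [h]
  exact Finset.single_le_sum (f := fun ω' => if X ω' = X ω then p ω' else 0)
    (fun ω' _ => by split <;> simp [hp ω']) (Finset.mem_univ ω)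

lemma exists_pos_of_distOf_pos {p : Ω → ℝ} (hp : ∀ ω, 0 ≤ p ω) {X : Ω → F} {y : F}
    (h : 0 < distOf p X y) : ∃ ω, 0 < p ω ∧ X ω = y := by
  rw [distOf_def] at h
  by_contra hc
  push_neg at hc
  have hle : ∑ ω, (if X ω = y then p ω else 0) ≤ 0 := by
    apply Finset.sum_nonpos
    intro ω _
    by_cases hx : X ω = y
    · simp only [hx, if_true]
      rcases (hp ω).eq_or_lt with h' | h'
      · exact h'.ge
      · exact absurd hx (hc ω h')
    · simp [hx]
  linarith

lemma distOf_pair_marginal (p : Ω → ℝ) (X : Ω → F) (Y : Ω → G) (y : G) :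
    ∑ x, distOf p (fun ω => (X ω, Y ω)) (x, y) = distOf p Y y := by
  simp only [distOf_def]
  rw [Finset.sum_comm]
  refine Finset.sum_congr rfl fun ω _ => ?_
  by_cases hY : Y ω = y
  · simp [Prod.ext_iff, hY, Finset.sum_ite_eq]
  · simp [Prod.ext_iff, hY]

lemma Hcond_eq (p : Ω → ℝ) (X : Ω → F) (Y : Ω → G) :
    Hcond p X Y = ∑ y,
      ((∑ x, distOf p (fun ω => (X ω, Y ω)) (x, y)) *
        Real.log (∑ x, distOf p (fun ω => (X ω, Y ω)) (x, y)) -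
       ∑ x, distOf p (fun ω => (X ω, Y ω)) (x, y) *
        Real.log (distOf p (fun ω => (X ω, Y ω)) (x, y))) := by
  unfold Hcond Hent
  rw [Fintype.sum_prod_type, Finset.sum_comm]
  rw [Finset.sum_sub_distrib]
  have : ∀ y : G, distOf p Y y * Real.log (distOf p Y y) =
      (∑ x, distOf p (fun ω => (X ω, Y ω)) (x, y)) *
        Real.log (∑ x, distOf p (fun ω => (X ω, Y ω)) (x, y)) := by
    intro y; rw [distOf_pair_marginal]
  simp only [this]
  ring

lemma det_of_Hcond_eq_zero {p : Ω → ℝ} (hp : ∀ ω, 0 ≤ p ω) {X : Ω → F} {Y : Ω → G}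
    (h : Hcond p X Y = 0) : Det p X Y := by
  rw [Hcond_eq] at h
  set d : F → G → ℝ := fun x y => distOf p (fun ω => (X ω, Y ω)) (x, y) with hd
  have hdnn : ∀ x y, 0 ≤ d x y := fun x y => distOf_nonneg p hp _ _
  have hterm : ∀ y ∈ (Finset.univ : Finset G),
      0 ≤ (∑ x, d x y) * Real.log (∑ x, d x y) - ∑ x, d x y * Real.log (d x y) := by
    intro y _
    have := sum_mul_log_le Finset.univ (fun x => d x y) (fun x _ => hdnn x y)
    linarith
  have hzero := (Finset.sum_eq_zero_iff_of_nonneg hterm).mp h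
  intro ω ω' hω hω' hY
  by_contra hX
  have hyz : (fun ω => (X ω, Y ω)) ω = (X ω, Y ω) := rfl
  have h1 : 0 < d (X ω) (Y ω) := lt_of_lt_of_le hω (le_distOf p hp _ ω)
  have h2 : 0 < d (X ω') (Y ω) := by
    have := le_distOf p hp (fun ω => (X ω, Y ω)) ω'
    rw [hd]
    have hYω : (X ω', Y ω') = (X ω', Y ω) := by rw [hY]
    calc (0:ℝ) < p ω' := hω'
      _ ≤ distOf p (fun ω => (X ω, Y ω)) (X ω', Y ω') := this
      _ = distOf p (fun ω => (X ω, Y ω)) (X ω', Y ω) := by rw [hYω]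
  have hstrict := sum_mul_log_lt (fun x => d x (Y ω)) (fun x => hdnn x (Y ω))
    hX h1 h2
  have := hzero (Y ω) (Finset.mem_univ _)
  linarith

lemma Hcond_eq_zero_of_det {p : Ω → ℝ} (hp : ∀ ω, 0 ≤ p ω) {X : Ω → F} {Y : Ω → G}
    (h : Det p X Y) : Hcond p X Y = 0 := by
  rw [Hcond_eq]
  apply Finset.sum_eq_zero
  intro y _
  set d : F → ℝ := fun x => distOf p (fun ω => (X ω, Y ω)) (x, y) with hd
  have hdnn : ∀ x, 0 ≤ d x := fun x => distOf_nonneg p hp _ _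
  by_cases hpos : ∃ x₀, 0 < d x₀
  · obtain ⟨x₀, hx₀⟩ := hpos
    have huniq : ∀ x, x ≠ x₀ → d x = 0 := by
      intro x hx
      by_contra hne
      have hxpos : 0 < d x := lt_of_le_of_ne (hdnn x) (Ne.symm hne)
      obtain ⟨ω, hω, hXY⟩ := exists_pos_of_distOf_pos hp hxpos
      obtain ⟨ω₀, hω₀, hXY₀⟩ := exists_pos_of_distOf_pos hp hx₀
      have hYeq : Y ω = Y ω₀ := by
        have h1 : Y ω = y := congrArg Prod.snd hXY
        have h2 : Y ω₀ = y := congrArg Prod.snd hXY₀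
        rw [h1, h2]
      have := h ω ω₀ hω hω₀ hYeq
      have hx1 : X ω = x := congrArg Prod.fst hXY
      have hx2 : X ω₀ = x₀ := congrArg Prod.fst hXY₀
      exact hx (by rw [← hx1, this, hx2])
    have hsum : ∑ x, d x = d x₀ :=
      Finset.sum_eq_single x₀ (fun b _ hb => huniq b hb) (fun hb => absurd (Finset.mem_univ x₀) hb)
    have hsum2 : ∑ x, d x * Real.log (d x) = d x₀ * Real.log (d x₀) :=
      Finset.sum_eq_single x₀ (fun b _ hb => by rw [huniq b hb]; simp)
        (fun hb => absurd (Finset.mem_univ x₀) hb)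
    rw [hsum, hsum2]; ring
  · push_neg at hpos
    have hall : ∀ x, d x = 0 := fun x => le_antisymm (hpos x) (hdnn x)
    have hsum : ∑ x, d x = 0 := Finset.sum_eq_zero fun x _ => hall x
    show (∑ x, d x) * Real.log (∑ x, d x) - ∑ x, d x * Real.log (d x) = 0
    rw [hsum]
    simp [hall]

lemma Det_mono_left {Ω F : Type*} [Fintype Ω] {K : ℕ} {p : Ω → ℝ} {X : Fin K → Ω → F}
    {T' T : Finset (Fin K)} (hsub : T' ⊆ T) {G : Type*} {Y : Ω → G}
    (h : Det p (XT X T) Y) : Det p (XT X T') Y := by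
  intro ω ω' hω hω' hY
  funext i
  exact congrFun (h ω ω' hω hω' hY) ⟨i.1, hsub i.2⟩

end Determinism

section MainInduction

variable {Ω F 𝒬 𝒜 : Type*} [Fintype Ω] [Fintype F] [Fintype 𝒬] [Fintype 𝒜]

lemma key_induction {K D M : ℕ} (hMD : M < D)
    (p : Ω → ℝ) (X : Fin K → Ω → F) (Q : Ω → 𝒬) (A : Ω → 𝒜)
    (hcond : ∀ W : Finset (Fin K), W.card = D →
      ∃ S : Finset (Fin K), S.card = M ∧ Disjoint S W ∧
        Det p (XT X W) (fun ω => (A ω, Q ω, XT X S ω))) :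
    ∀ n (S T : Finset (Fin K)), (Tᶜ).card ≤ n → S.card = M → S ⊆ T → D ≤ T.card →
      Det p (XT X T) (fun ω => (A ω, Q ω, XT X S ω)) →
      ∃ Sstar : Finset (Fin K), Sstar.card = M ∧
        Det p (XT X Sstarᶜ) (fun ω => (A ω, Q ω, XT X Sstar ω)) := by
  intro n
  induction n with
  | zero =>
    intro S T hcompl hS hST hTcard hdet
    have hT : T = Finset.univ := by
      have : Tᶜ = ∅ := Finset.card_eq_zero.mp (Nat.le_zero.mp hcompl)
      simpa [Finset.compl_eq_empty_iff] using this
    refine ⟨S, hS, ?_⟩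
    exact Det_mono_left (by rw [hT]; exact Finset.subset_univ _) hdet
  | succ n ih =>
    intro S T hcompl hS hST hTcard hdet
    by_cases hT : T = Finset.univ
    · refine ⟨S, hS, ?_⟩
      exact Det_mono_left (by rw [hT]; exact Finset.subset_univ _) hdet
    · have hne : (Tᶜ).Nonempty := by
        rw [Finset.nonempty_iff_ne_empty]
        intro hemp
        exact hT (by simpa [Finset.compl_eq_empty_iff] using hemp)
      obtain ⟨j, hj⟩ := hne
      have hjT : j ∉ T := Finset.mem_compl.mp hj
      -- pick padding P ⊆ T \ S of size D - M - 1
      have hTS : D - M - 1 ≤ (T \ S).card := by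
        rw [Finset.card_sdiff_of_subset hST]
        omega
      obtain ⟨P, hPsub, hPcard⟩ := Finset.exists_subset_card_eq (s := T \ S) (n := D - M - 1) hTS
      set W : Finset (Fin K) := insert j (S ∪ P) with hW
      have hPT : P ⊆ T := hPsub.trans (Finset.sdiff_subset)
      have hSPT : S ∪ P ⊆ T := Finset.union_subset hST hPT
      have hjSP : j ∉ S ∪ P := fun hmem => hjT (hSPT hmem)
      have hSP : Disjoint S P :=
        (Finset.disjoint_of_subset_right hPsub Finset.disjoint_sdiff)
      have hWcard : W.card = D := by
        rw [hW, Finset.card_insert_of_notMem hjSP, Finset.card_union_of_disjoint hSP,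
          hS, hPcard]
        omega
      obtain ⟨S', hS'card, hS'disj, hS'det⟩ := hcond W hWcard
      set T' : Finset (Fin K) := T ∪ W ∪ S' with hT'
      have hTT' : T ⊆ T' := (Finset.subset_union_left).trans Finset.subset_union_left
      have hWT' : W ⊆ T' := (Finset.subset_union_right).trans Finset.subset_union_left
      have hS'T' : S' ⊆ T' := Finset.subset_union_right
      have hjT' : j ∈ T' := hWT' (by rw [hW]; exact Finset.mem_insert_self _ _)
      have hcompl' : (T'ᶜ).card ≤ n := by
        have hsub : T'ᶜ ⊆ Tᶜ.erase j := by
          intro x hx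
          rw [Finset.mem_erase]
          have hxT' : x ∉ T' := Finset.mem_compl.mp hx
          exact ⟨fun hxj => hxT' (hxj ▸ hjT'), Finset.mem_compl.mpr fun hxT => hxT' (hTT' hxT)⟩
        have := Finset.card_le_card hsub
        rw [Finset.card_erase_of_mem hj] at this
        have hpos : 0 < Tᶜ.card := Finset.card_pos.mpr ⟨j, hj⟩
        omega
      have hSW : S ⊆ W := by
        rw [hW]
        exact Finset.subset_union_left.trans (Finset.subset_insert _ _)
      have hdet' : Det p (XT X T') (fun ω => (A ω, Q ω, XT X S' ω)) := by
        intro ω ω' hω hω' hy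
        have hWeq : XT X W ω = XT X W ω' := hS'det ω ω' hω hω' hy
        have hA : A ω = A ω' := congrArg Prod.fst hy
        have hQ : Q ω = Q ω' := congrArg (Prod.fst ∘ Prod.snd) hy
        have hS'eq : XT X S' ω = XT X S' ω' := congrArg (Prod.snd ∘ Prod.snd) hy
        have hSeq : XT X S ω = XT X S ω' := by
          funext i
          exact congrFun hWeq ⟨i.1, hSW i.2⟩
        have hTeq : XT X T ω = XT X T ω' :=
          hdet ω ω' hω hω' (by rw [Prod.ext_iff, Prod.ext_iff]; exact ⟨hA, hQ, hSeq⟩)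
        funext i
        rcases Finset.mem_union.mp i.2 with h2 | h2
        · rcases Finset.mem_union.mp h2 with h3 | h3
          · exact congrFun hTeq ⟨i.1, h3⟩
          · exact congrFun hWeq ⟨i.1, h3⟩
        · exact congrFun hS'eq ⟨i.1, h2⟩
      exact ih S' T' hcompl' hS'card hS'T' (le_trans hTcard (Finset.card_le_card hTT')) hdet'

end MainInduction

theorem stmt_3 {Ω F 𝒬 𝒜 : Type*} [Fintype Ω] [Fintype F] [Nonempty F]
    [Fintype 𝒬] [Nonempty 𝒬] [Fintype 𝒜] [Nonempty 𝒜]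
    {K D M : ℕ} (hMD : M < D) (hDMK : D + M ≤ K)
    (p : Ω → ℝ) (hp : ∀ ω, 0 ≤ p ω) (hp1 : ∑ ω, p ω = 1)
    (X : Fin K → Ω → F) (Q : Ω → 𝒬) (A : Ω → 𝒜)
    -- for every candidate demand set there is a compatible candidate side information set
    (hcond : ∀ Wstar : Finset (Fin K), Wstar.card = D →
      ∃ Sstar : Finset (Fin K), Sstar.card = M ∧ Disjoint Sstar Wstar ∧
        Hcond p (XT X Wstar) (fun ω => (A ω, Q ω, XT X Sstar ω)) = 0) :
    ∃ Sstar : Finset (Fin K), Sstar.card = M ∧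
      Hcond p (XT X Sstarᶜ) (fun ω => (A ω, Q ω, XT X Sstar ω)) = 0 := by
  -- turn the zero-entropy hypotheses into determinism
  have hcond' : ∀ W : Finset (Fin K), W.card = D →
      ∃ S : Finset (Fin K), S.card = M ∧ Disjoint S W ∧
        Det p (XT X W) (fun ω => (A ω, Q ω, XT X S ω)) := by
    intro W hWcard
    obtain ⟨S, hS, hdisj, hzero⟩ := hcond W hWcard
    exact ⟨S, hS, hdisj, det_of_Hcond_eq_zero hp hzero⟩
  -- initial demand set
  have hDK : D ≤ (Finset.univ : Finset (Fin K)).card := by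
    rw [Finset.card_univ, Fintype.card_fin]
    omega
  obtain ⟨W₀, _, hW₀card⟩ := Finset.exists_subset_card_eq (s := Finset.univ) (n := D) hDK
  obtain ⟨S₀, hS₀card, hS₀disj, hS₀det⟩ := hcond' W₀ hW₀card
  set T₀ : Finset (Fin K) := W₀ ∪ S₀ with hT₀
  have hS₀T₀ : S₀ ⊆ T₀ := Finset.subset_union_right
  have hT₀card : D ≤ T₀.card :=
    hW₀card ▸ Finset.card_le_card Finset.subset_union_left
  have hdet₀ : Det p (XT X T₀) (fun ω => (A ω, Q ω, XT X S₀ ω)) := by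
    intro ω ω' hω hω' hy
    have hWeq : XT X W₀ ω = XT X W₀ ω' := hS₀det ω ω' hω hω' hy
    have hS₀eq : XT X S₀ ω = XT X S₀ ω' := congrArg (Prod.snd ∘ Prod.snd) hy
    funext i
    rcases Finset.mem_union.mp i.2 with h2 | h2
    · exact congrFun hWeq ⟨i.1, h2⟩
    · exact congrFun hS₀eq ⟨i.1, h2⟩
  obtain ⟨Sstar, hScard, hSdet⟩ := key_induction hMD p X Q A hcond' (T₀ᶜ).card S₀ T₀
    le_rfl hS₀card hS₀T₀ hT₀card hdet₀
  exact ⟨Sstar, hScard, Hcond_eq_zero_of_det hp hSdet⟩
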